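/- Let $(T^+, \Delta^+)$ be a coassociative counital Hopf algebra with counit $\mathbf{1}'$ and basis $\mathcal{B}^+$. For $\sigma <^+ \tau$ in $\mathcal{B}^+$, one has $\Delta^+(\tau/^+\sigma) = (\tau/^+\sigma) \otimes \mathbf{1} + \mathbf{1} \otimes (\tau/^+\sigma) + \sum_{\sigma <^+ \eta <^+ \tau} (\eta/^+\sigma) \otimes (\tau/^+\eta)$. -/

import Mathlib

open Finset

/-- Let `T⁺` be a graded (connected) Hopf algebra with basis `Bp`, unit basis
element `one`, coproduct structure constants `dp θ b c = (Δ⁺θ)^{bc}`, and grading `deg`,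
satisfying coassociativity and the triangular structure
`Δ⁺τ ∈ τ ⊗ 1 + 1 ⊗ τ + ∑_{0<β<|τ|} T⁺_β ⊗ T⁺_{|τ|-β}`.  For `σ <⁺ τ` (i.e. `σ ≠ τ` and
`τ/⁺σ ≠ 0`, where `τ/⁺σ` has coordinates `θ ↦ dp τ σ θ`), one has
`Δ⁺(τ/⁺σ) = (τ/⁺σ) ⊗ 1 + 1 ⊗ (τ/⁺σ) + ∑_{σ <⁺ η <⁺ τ} (η/⁺σ) ⊗ (τ/⁺η)`,
in coordinates: for all `b c`. -/
theorem stmt2 {Bp : Type*} [Fintype Bp] [DecidableEq Bp]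
    (dp : Bp → Bp → Bp → ℝ) (one : Bp) (deg : Bp → ℝ)
    (hone : deg one = 0)
    (hcoassoc : ∀ (τ a b c : Bp),
      ∑ σ : Bp, dp τ σ c * dp σ a b = ∑ θ : Bp, dp τ a θ * dp θ b c)
    (hgrade : ∀ τ σ θ : Bp, dp τ σ θ ≠ 0 →
      (σ = τ ∧ θ = one) ∨ (σ = one ∧ θ = τ) ∨
        (0 < deg σ ∧ deg σ < deg τ ∧ deg σ + deg θ = deg τ))
    (hdiag : ∀ τ, dp τ τ one = 1)
    (hunit : ∀ τ, dp τ one τ = 1)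
    (τ σ : Bp) (hne : σ ≠ τ) (hle : (fun θ => dp τ σ θ) ≠ 0) :
    ∀ b c : Bp,
      ∑ θ : Bp, dp τ σ θ * dp θ b c
        = (if c = one then dp τ σ b else 0) + (if b = one then dp τ σ c else 0)
          + ∑ η ∈ univ.filter (fun η : Bp => η ≠ σ ∧ η ≠ τ), dp η σ b * dp τ η c := by
  intro b c
  have hd : ∀ (ρ : Bp) (x : Bp), dp ρ ρ x = if x = one then 1 else 0 := by
    intro ρ x
    by_cases hx : x = one
    · simp [hx, hdiag]
    · simp only [hx, if_false]
      by_contra h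
      rcases hgrade ρ ρ x h with ⟨_, h1⟩ | ⟨h1, h2⟩ | ⟨_, h2, _⟩
      · exact hx h1
      · exact hx (h2.trans h1)
      · exact lt_irrefl _ h2
  rw [← hcoassoc τ σ b c,
    ← Finset.sum_filter_add_sum_filter_not univ (fun η => η ≠ σ ∧ η ≠ τ)
      (fun η => dp τ η c * dp η σ b)]
  have hset : univ.filter (fun η : Bp => ¬(η ≠ σ ∧ η ≠ τ)) = {σ, τ} := by
    ext x; simp [not_and_or]; tauto
  rw [hset, Finset.sum_pair hne, hd σ b, hd τ c]
  have : ∀ η, dp τ η c * dp η σ b = dp η σ b * dp τ η c := fun η => mul_comm _ _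
  simp only [this, mul_ite, ite_mul, mul_one, mul_zero, one_mul, zero_mul]
  ring
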